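/- Let P be a poset with least element 0 and Z(P)^× ≠ ∅ such that the reduced zero-divisor graph Γ_E(P) has exactly three vertices. Then Γ_E(P) is isomorphic to the complete graph K_3. -/

import Mathlib

/-- `L(x,y) = {z : z ≤ x ∧ z ≤ y}`, where the least element `0` of the poset is `⊥`. -/
def LSet (P : Type*) [PartialOrder P] [OrderBot P] (x y : P) : Set P := {z | z ≤ x ∧ z ≤ y}

theorem LSet_comm (P : Type*) [PartialOrder P] [OrderBot P] (x y : P) :
    LSet P x y = LSet P y x := by
  ext z; exact ⟨fun h => ⟨h.2, h.1⟩, fun h => ⟨h.2, h.1⟩⟩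

/-- The annihilator of `x`: `ann(x) = {y : L(x,y) = {0}}`. -/
def ann (P : Type*) [PartialOrder P] [OrderBot P] (x : P) : Set P := {y | LSet P x y = {⊥}}

theorem mem_ann_comm (P : Type*) [PartialOrder P] [OrderBot P] (x y : P) :
    y ∈ ann P x ↔ x ∈ ann P y := by
  simp only [ann, Set.mem_setOf_eq, LSet_comm P x y]

/-- The set `Z(P)^× = Z(P) \ {0}` of nonzero zero-divisors of `P`. -/
def ZDivX (P : Type*) [PartialOrder P] [OrderBot P] : Set P :=
  {x | x ≠ ⊥ ∧ ∃ y : P, y ≠ ⊥ ∧ LSet P x y = {⊥}}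

/-- The zero-divisor graph `Γ(P)` on `Z(P)^×`. -/
def zdGraph (P : Type*) [PartialOrder P] [OrderBot P] : SimpleGraph (ZDivX P) where
  Adj a b := (a : P) ≠ (b : P) ∧ LSet P a b = {⊥}
  symm := by
    constructor
    rintro a b ⟨h1, h2⟩
    exact ⟨fun h => h1 h.symm, by rw [LSet_comm]; exact h2⟩
  loopless := by constructor; rintro a ⟨h1, _⟩; exact h1 rfl

/-- The equivalence `x ∼ y ↔ ann(x) = ann(y)` on `Z(P)^×`. -/
def annSetoid (P : Type*) [PartialOrder P] [OrderBot P] : Setoid (ZDivX P) where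
  r a b := ann P a = ann P b
  iseqv := ⟨fun _ => rfl, Eq.symm, Eq.trans⟩

/-- The reduced zero-divisor graph `Γ_E(P)`, on equivalence classes of `Z(P)^×`. -/
def redGraph (P : Type*) [PartialOrder P] [OrderBot P] :
    SimpleGraph (Quotient (annSetoid P)) where
  Adj := Quotient.lift₂ (fun a b => LSet P (a : P) (b : P) = {⊥}) (by
    intro a b a' b' ha hb
    have ha' : ann P (a : P) = ann P (a' : P) := ha
    have hb' : ann P (b : P) = ann P (b' : P) := hb
    apply propext
    constructor
    · intro h
      have h1 : (b : P) ∈ ann P (a : P) := h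
      rw [ha', mem_ann_comm, hb', mem_ann_comm] at h1
      exact h1
    · intro h
      have h1 : (b' : P) ∈ ann P (a' : P) := h
      rw [← ha', mem_ann_comm, ← hb', mem_ann_comm] at h1
      exact h1)
  symm := by
    constructor
    intro x y
    refine Quotient.inductionOn₂ x y ?_
    intro a b h
    have h' : LSet P (a : P) (b : P) = {⊥} := h
    show LSet P (b : P) (a : P) = {⊥}
    rw [LSet_comm]; exact h'
  loopless := by
    constructor
    intro x
    refine Quotient.inductionOn x ?_
    intro a h
    have h' : LSet P (a : P) (a : P) = {⊥} := h
    have hm : (a : P) ∈ LSet P (a : P) (a : P) := ⟨le_refl _, le_refl _⟩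
    rw [h'] at hm
    exact a.2.1 hm

section AuxStmt8
variable {P : Type*} [PartialOrder P] [OrderBot P]

lemma bot_mem_ann' (x : P) : (⊥ : P) ∈ ann P x := by
  ext z
  simp only [LSet, Set.mem_setOf_eq, Set.mem_singleton_iff]
  constructor
  · rintro ⟨-, h⟩; exact le_bot_iff.mp h
  · rintro rfl; exact ⟨bot_le, bot_le⟩

lemma not_self_mem_ann' (a : ZDivX P) : (a : P) ∉ ann P (a : P) := by
  intro h
  have hm : (a : P) ∈ LSet P (a : P) (a : P) := ⟨le_refl _, le_refl _⟩
  rw [h] at hm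
  exact a.2.1 hm

lemma three_classes_stmt8 {Q : Type*} (h3 : Nat.card Q = 3) (x y z : Q)
    (hxy : x ≠ y) (hxz : x ≠ z) (hyz : y ≠ z) (w : Q) : w = x ∨ w = y ∨ w = z := by
  by_contra h
  push_neg at h
  obtain ⟨hwx, hwy, hwz⟩ := h
  have hfin : Finite Q := Nat.finite_of_card_ne_zero (by omega)
  have := Fintype.ofFinite Q
  classical
  have hc : ({w, x, y, z} : Finset Q).card = 4 := by
    rw [Finset.card_insert_of_notMem (by simp [hwx, hwy, hwz]),
        Finset.card_insert_of_notMem (by simp [hxy, hxz]),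
        Finset.card_insert_of_notMem (by simp [hyz]),
        Finset.card_singleton]
  have hle := Finset.card_le_univ ({w, x, y, z} : Finset Q)
  rw [hc] at hle
  rw [Nat.card_eq_fintype_card] at h3
  omega

/-- Core case: `t ∈ ann a \ ann b` with `[a] ≠ [b]` nonadjacent gives a contradiction. -/
lemma core_stmt8 (a b : ZDivX P) (hL : LSet P (a : P) (b : P) ≠ {⊥})
    (hne : ann P (a : P) ≠ ann P (b : P))
    (t : P) (hta : t ∈ ann P (a : P)) (htb : t ∉ ann P (b : P))
    (h3 : Nat.card (Quotient (annSetoid P)) = 3) : False := by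
  have htbot : t ≠ ⊥ := by rintro rfl; exact htb (bot_mem_ann' _)
  have htZ : t ∈ ZDivX P := ⟨htbot, a, a.2.1, (mem_ann_comm P _ _).mp hta⟩
  set tt : ZDivX P := ⟨t, htZ⟩ with htt
  have hat : ann P (a : P) ≠ ann P t := by
    intro h
    exact not_self_mem_ann' a (h ▸ (mem_ann_comm P _ _).mp hta)
  have hbt : ann P (b : P) ≠ ann P t := by
    intro h
    have : (a : P) ∈ ann P (b : P) := h ▸ (mem_ann_comm P _ _).mp hta
    exact hL (LSet_comm P (a:P) (b:P) ▸ this)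
  -- the three classes
  have hqab : (Quotient.mk (annSetoid P) a) ≠ Quotient.mk (annSetoid P) b :=
    fun h => hne (Quotient.exact h)
  have hqat : (Quotient.mk (annSetoid P) a) ≠ Quotient.mk (annSetoid P) tt :=
    fun h => hat (Quotient.exact h)
  have hqbt : (Quotient.mk (annSetoid P) b) ≠ Quotient.mk (annSetoid P) tt :=
    fun h => hbt (Quotient.exact h)
  -- use b's zero-divisor witness
  obtain ⟨w, hwbot, hwL⟩ := b.2.2
  have hwZ : w ∈ ZDivX P := ⟨hwbot, b, b.2.1, LSet_comm P w (b:P) ▸ hwL⟩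
  have hbw : (b : P) ∈ ann P w := (mem_ann_comm P _ _).mp hwL
  rcases three_classes_stmt8 h3 _ _ _ hqab hqat hqbt
      (Quotient.mk (annSetoid P) (⟨w, hwZ⟩ : ZDivX P)) with hi | hi | hi
  · have h : ann P w = ann P (a : P) := Quotient.exact hi
    have hba : (b : P) ∈ ann P (a : P) := h ▸ hbw
    exact hL hba
  · have h : ann P w = ann P (b : P) := Quotient.exact hi
    exact not_self_mem_ann' b (h ▸ hbw)
  · have h : ann P w = ann P t := Quotient.exact hi
    have : (b : P) ∈ ann P t := h ▸ hbw
    exact htb ((mem_ann_comm P _ _).mp this)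

lemma adj_of_ne_stmt8 (h3 : Nat.card (Quotient (annSetoid P)) = 3)
    (q r : Quotient (annSetoid P)) (hqr : q ≠ r) : (redGraph P).Adj q r := by
  refine Quotient.inductionOn₂ q r (fun a b hab => ?_) hqr
  have hne : ann P (a : P) ≠ ann P (b : P) := fun h => hab (Quotient.sound h)
  show LSet P (a : P) (b : P) = {⊥}
  by_contra hL
  have : ¬ ∀ t, t ∈ ann P (a : P) ↔ t ∈ ann P (b : P) := fun h => hne (Set.ext h)
  push_neg at this
  obtain ⟨t, ht⟩ := this
  rcases ht with ⟨hta, htb⟩ | ⟨hta, htb⟩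
  · exact core_stmt8 a b hL hne t hta htb h3
  · exact core_stmt8 b a (fun h => hL (LSet_comm P (a:P) (b:P) ▸ h)) hne.symm t htb hta h3

end AuxStmt8

/-- If `Γ_E(P)` has exactly three vertices, then `Γ_E(P)` is the complete graph `K₃`. -/
theorem stmt8 (P : Type*) [PartialOrder P] [OrderBot P] (hZ : (ZDivX P).Nonempty)
    (h3 : Nat.card (Quotient (annSetoid P)) = 3) :
    Nonempty (redGraph P ≃g (⊤ : SimpleGraph (Fin 3))) := by
  have hfin : Finite (Quotient (annSetoid P)) := Nat.finite_of_card_ne_zero (by omega)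
  have e : Quotient (annSetoid P) ≃ Fin 3 := Finite.equivFinOfCardEq h3
  refine ⟨⟨e, ?_⟩⟩
  intro q r
  simp only [SimpleGraph.top_adj, ne_eq, EmbeddingLike.apply_eq_iff_eq]
  constructor
  · intro h; exact adj_of_ne_stmt8 h3 q r h
  · intro h; exact h.ne
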